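/- Let σ be a permutation of {1, …, m} with σ² = id, and let φ_σ : [-π/2, π/2] → [-π/2, π/2] be the λ-measure-preserving map that sends each Θ_i^m onto Θ_{σ(i)}^m monotonically decreasingly when σ(i) ≠ i and is the identity when σ(i) = i. Then the pushforward measure ν^σ of λ under φ ↦ (φ, φ_σ(φ)) has both coordinate marginals equal to λ and is symmetric under the reflection (φ, φ⁺) ↦ (φ⁺, φ). -/

import Mathlib

open Real MeasureTheory Set Filter Topology

noncomputable def lam : Measure ℝ :=
  (volume.restrict (Set.Icc (-(π/2)) (π/2))).withDensity fun φ => ENNReal.ofReal (Real.cos φ)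

lemma sin_image_Ioo : Real.sin '' Set.Ioo (-(π/2)) (π/2) = Set.Ioo (-1:ℝ) 1 := by
  ext y
  constructor
  · rintro ⟨x, hx, rfl⟩
    have h1 : Real.sin x < Real.sin (π/2) :=
      Real.strictMonoOn_sin ⟨hx.1.le, hx.2.le⟩ (Set.right_mem_Icc.2 (by linarith [Real.pi_pos])) hx.2
    have h2 : Real.sin (-(π/2)) < Real.sin x :=
      Real.strictMonoOn_sin (Set.left_mem_Icc.2 (by linarith [Real.pi_pos])) ⟨hx.1.le, hx.2.le⟩ hx.1
    simpa [Real.sin_pi_div_two] using And.intro h2 h1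
  · intro hy
    exact ⟨Real.arcsin y, ⟨Real.neg_pi_div_two_lt_arcsin.2 hy.1, Real.arcsin_lt_pi_div_two.2 hy.2⟩,
      Real.sin_arcsin hy.1.le hy.2.le⟩

lemma map_sin_lam : Measure.map Real.sin lam = volume.restrict (Set.Ioo (-1:ℝ) 1) := by
  have h0 : lam = ((volume : Measure ℝ).restrict (Set.Ioo (-(π/2)) (π/2))).withDensity
      (fun x => ENNReal.ofReal |((1 : ℝ →L[ℝ] ℝ).smulRight (Real.cos x)).det|) := by
    unfold lam
    rw [show (volume : Measure ℝ).restrict (Set.Icc (-(π/2)) (π/2))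
        = (volume : Measure ℝ).restrict (Set.Ioo (-(π/2)) (π/2)) from
      (Measure.restrict_congr_set Ioo_ae_eq_Icc).symm]
    refine withDensity_congr_ae ?_
    filter_upwards [ae_restrict_mem measurableSet_Ioo] with x hx
    rw [ContinuousLinearMap.det_smulRight, ContinuousLinearMap.one_apply, one_mul, abs_of_nonneg (Real.cos_nonneg_of_mem_Icc (Set.Ioo_subset_Icc_self hx))]
  rw [h0, map_withDensity_abs_det_fderiv_eq_addHaar (μ := volume)
      (f' := fun x => (1 : ℝ →L[ℝ] ℝ).smulRight (Real.cos x)) measurableSet_Ioo.nullMeasurableSet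
      (fun x _ => (Real.hasDerivAt_sin x).hasFDerivAt.hasFDerivWithinAt)
      (Real.injOn_sin.mono Set.Ioo_subset_Icc_self), sin_image_Ioo]

lemma lam_map_arcsin : Measure.map Real.arcsin (volume.restrict (Set.Ioo (-1:ℝ) 1)) = lam := by
  rw [← map_sin_lam, Measure.map_map Real.measurable_arcsin Real.measurable_sin]
  have hmem : ∀ᵐ x ∂lam, x ∈ Set.Icc (-(π/2)) (π/2) :=
    (withDensity_absolutelyContinuous _ _).ae_le (ae_restrict_mem measurableSet_Icc)
  have : (Real.arcsin ∘ Real.sin) =ᵐ[lam] id := by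
    filter_upwards [hmem] with x hx
    exact Real.arcsin_sin hx.1 hx.2
  rw [Measure.map_congr this, Measure.map_id]

theorem stmt5 (m : ℕ) (hm : 0 < m) (σ : Equiv.Perm (Fin m)) (hσ : ∀ k, σ (σ k) = k)
    (φσ : ℝ → ℝ) (hmeas : Measurable φσ)
    (hid : ∀ k : Fin m, σ k = k →
      ∀ φ ∈ Set.Ioo (Real.arcsin (-1 + 2*((k:ℕ):ℝ)/m)) (Real.arcsin (-1 + 2*(((k:ℕ):ℝ)+1)/m)),
        φσ φ = φ)
    (hne : ∀ k : Fin m, σ k ≠ k →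
      ∀ φ ∈ Set.Ioo (Real.arcsin (-1 + 2*((k:ℕ):ℝ)/m)) (Real.arcsin (-1 + 2*(((k:ℕ):ℝ)+1)/m)),
        φσ φ = Real.arcsin (-2 + 2*(((k:ℕ):ℝ) + ((σ k : Fin m):ℕ) + 1)/m - Real.sin φ)) :
    (Measure.map (fun φ => (φ, φσ φ)) lam).map Prod.fst = lam ∧
    (Measure.map (fun φ => (φ, φσ φ)) lam).map Prod.snd = lam ∧
    (Measure.map (fun φ => (φ, φσ φ)) lam).map Prod.swap
      = Measure.map (fun φ => (φ, φσ φ)) lam := by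
  have hm' : (0:ℝ) < m := by exact_mod_cast hm
  have hm0 : (m:ℝ) ≠ 0 := ne_of_gt hm'
  -- grid points
  set a : ℕ → ℝ := fun i => -1 + 2*(i:ℝ)/m with ha_def
  have ha_succ : ∀ k : ℕ, a (k+1) = -1 + 2*((k:ℝ)+1)/m := by
    intro k; simp only [ha_def]; push_cast; ring
  have ha_mono : ∀ i j : ℕ, i ≤ j → a i ≤ a j := by
    intro i j h
    have hij : (i:ℝ) ≤ j := Nat.cast_le.2 h
    have : 2*(i:ℝ)/m ≤ 2*(j:ℝ)/m := by gcongr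
    simp only [ha_def]; linarith
  have ha_mem : ∀ i : ℕ, i ≤ m → a i ∈ Set.Icc (-1:ℝ) 1 := by
    intro i hi
    have h1 : (0:ℝ) ≤ 2*(i:ℝ)/m := by positivity
    have h2 : 2*(i:ℝ)/m ≤ 2 := by
      rw [div_le_iff₀ hm']
      have : (i:ℝ) ≤ m := Nat.cast_le.2 hi
      linarith
    simp only [ha_def, Set.mem_Icc]; constructor <;> linarith
  -- the intervals
  set I : Fin m → Set ℝ := fun i => Set.Ioo (a i) (a ((i:ℕ)+1)) with hI_def
  set Θ : Fin m → Set ℝ := fun i => Set.Ioo (Real.arcsin (a i)) (Real.arcsin (a ((i:ℕ)+1))) with hΘ_def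
  have hIsub : ∀ i : Fin m, I i ⊆ Set.Icc (-1:ℝ) 1 := by
    intro i t ht
    have h1 := (ha_mem i (le_of_lt i.isLt)).1
    have h2 := (ha_mem ((i:ℕ)+1) i.isLt).2
    exact ⟨le_of_lt (lt_of_le_of_lt h1 ht.1), le_of_lt (lt_of_lt_of_le ht.2 h2)⟩
  have hΘI : ∀ i : Fin m, ∀ t ∈ I i, Real.arcsin t ∈ Θ i := by
    intro i t ht
    have hm1 := ha_mem i (le_of_lt i.isLt)
    have hm2 := ha_mem ((i:ℕ)+1) i.isLt
    exact ⟨Real.strictMonoOn_arcsin hm1 (hIsub i ht) ht.1,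
      Real.strictMonoOn_arcsin (hIsub i ht) hm2 ht.2⟩
  have hΘsub : ∀ i : Fin m, Θ i ⊆ Set.Icc (-(π/2)) (π/2) := by
    intro i φ hφ
    exact ⟨le_trans (Real.neg_pi_div_two_le_arcsin _) hφ.1.le,
      le_trans hφ.2.le (Real.arcsin_le_pi_div_two _)⟩
  have hsinΘ : ∀ i : Fin m, ∀ φ ∈ Θ i, Real.sin φ ∈ I i := by
    intro i φ hφ
    have hφIcc := hΘsub i hφ
    have h1 : Real.sin (Real.arcsin (a i)) < Real.sin φ :=
      Real.strictMonoOn_sin (Real.arcsin_mem_Icc _) hφIcc hφ.1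
    have h2 : Real.sin φ < Real.sin (Real.arcsin (a ((i:ℕ)+1))) :=
      Real.strictMonoOn_sin hφIcc (Real.arcsin_mem_Icc _) hφ.2
    have e1 := Real.sin_arcsin (ha_mem i (le_of_lt i.isLt)).1 (ha_mem i (le_of_lt i.isLt)).2
    have e2 := Real.sin_arcsin (ha_mem ((i:ℕ)+1) i.isLt).1 (ha_mem ((i:ℕ)+1) i.isLt).2
    exact ⟨by rwa [e1] at h1, by rwa [e2] at h2⟩
  -- bridging casts to the hypotheses' interval form
  have hΘeq : ∀ i : Fin m, Θ i
      = Set.Ioo (Real.arcsin (-1 + 2*((i:ℕ):ℝ)/m)) (Real.arcsin (-1 + 2*(((i:ℕ):ℝ)+1)/m)) := by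
    intro i
    simp only [hΘ_def]
    rw [ha_succ ((i:ℕ))]
  -- key arithmetic inequality
  have key : ∀ x y u : ℝ, -1 + 2*x/m < u → u < -1 + 2*(x+1)/m →
      -1 + 2*y/m < -2 + 2*(x + y + 1)/m - u ∧ -2 + 2*(x+y+1)/m - u < -1 + 2*(y+1)/m := by
    intro x y u h1 h2
    have e1 : 2*(x+1)/(m:ℝ) = 2*x/m + 2/m := by ring
    have e2 : 2*(y+1)/(m:ℝ) = 2*y/m + 2/m := by ring
    have e3 : 2*(x+y+1)/(m:ℝ) = 2*x/m + 2*y/m + 2/m := by ring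
    constructor <;> linarith
  -- reflection maps I i into I (σ i)
  have hrefl : ∀ i : Fin m, ∀ t ∈ I i,
      (-2 + 2*(((i:ℕ):ℝ) + ((σ i : Fin m):ℕ) + 1)/m - t) ∈ I (σ i) := by
    intro i t ht
    have h1 : -1 + 2*((i:ℕ):ℝ)/m < t := ht.1
    have h2 : t < -1 + 2*(((i:ℕ):ℝ)+1)/m := by rw [← ha_succ]; exact ht.2
    have := key ((i:ℕ):ℝ) (((σ i : Fin m):ℕ):ℝ) t h1 h2
    refine ⟨this.1, ?_⟩
    rw [ha_succ]
    exact this.2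
  -- preimage identity
  have hpre : ∀ i : Fin m,
      (fun t => (-2 + 2*(((i:ℕ):ℝ) + ((σ i : Fin m):ℕ) + 1)/m) - t) ⁻¹' I (σ i) = I i := by
    intro i
    ext t
    simp only [Set.mem_preimage]
    constructor
    · intro ht
      have h1 : -1 + 2*(((σ i : Fin m):ℕ):ℝ)/m
          < (-2 + 2*(((i:ℕ):ℝ) + ((σ i : Fin m):ℕ) + 1)/m) - t := ht.1
      have h2 : (-2 + 2*(((i:ℕ):ℝ) + ((σ i : Fin m):ℕ) + 1)/m) - t
          < -1 + 2*((((σ i : Fin m):ℕ):ℝ)+1)/m := by rw [← ha_succ]; exact ht.2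
      have hk := key (((σ i : Fin m):ℕ):ℝ) ((i:ℕ):ℝ) _ h1 h2
      have e : -2 + 2*((((σ i : Fin m):ℕ):ℝ) + ((i:ℕ):ℝ) + 1)/m
          - ((-2 + 2*(((i:ℕ):ℝ) + ((σ i : Fin m):ℕ) + 1)/m) - t) = t := by ring
      rw [e] at hk
      refine ⟨hk.1, ?_⟩
      rw [ha_succ]
      exact hk.2
    · intro ht
      exact hrefl i t ht
  -- pairwise disjoint
  have hdisj : Pairwise (Function.onFun Disjoint I) := by
    intro i j hij
    rcases lt_or_gt_of_ne hij with h | h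
    · refine Set.Ioo_disjoint_Ioo.2 ?_
      have : a ((i:ℕ)+1) ≤ a (j:ℕ) := ha_mono _ _ (Fin.lt_iff_val_lt_val.1 h)
      exact le_trans (min_le_left _ _) (le_trans this (le_max_right _ _))
    · refine Set.Ioo_disjoint_Ioo.2 ?_
      have : a ((j:ℕ)+1) ≤ a (i:ℕ) := ha_mono _ _ (Fin.lt_iff_val_lt_val.1 h)
      exact le_trans (min_le_right _ _) (le_trans this (le_max_left _ _))
  -- a.e. cover
  have hcover : Set.Ioo (-1:ℝ) 1 =ᵐ[volume] ⋃ i : Fin m, I i := by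
    rw [ae_eq_set]
    constructor
    · refine measure_mono_null ?_ ((Set.finite_range (fun k : Fin (m+1) => a (k:ℕ))).measure_zero _)
      rintro x ⟨hx, hx2⟩
      simp only [Set.mem_iUnion, not_exists] at hx2
      have hx1 : (0:ℝ) < x + 1 := by linarith [hx.1]
      have ht0 : (0:ℝ) ≤ (x+1)*m/2 := by positivity
      set i : ℕ := ⌊(x+1)*m/2⌋₊ with hi_def
      have hit : (i:ℝ) ≤ (x+1)*m/2 := Nat.floor_le ht0
      have hti : (x+1)*m/2 < i+1 := Nat.lt_floor_add_one _
      have him : i < m := by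
        have h3 : (x+1)*m/2 < m := by nlinarith [hx.2]
        have : (i:ℝ) < m := lt_of_le_of_lt hit h3
        exact_mod_cast this
      have hax : a i ≤ x := by
        have : 2*(i:ℝ)/m ≤ x + 1 := by
          rw [div_le_iff₀ hm']; nlinarith
        simp only [ha_def]; linarith
      have hxa : x < a (i+1) := by
        have : x + 1 < 2*((i:ℝ)+1)/m := by
          rw [lt_div_iff₀ hm']; nlinarith
        rw [ha_succ]; linarith
      have hxe : x = a i := by
        by_contra hxx
        exact hx2 ⟨i, him⟩ ⟨lt_of_le_of_ne hax (Ne.symm hxx), hxa⟩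
      exact ⟨⟨i, Nat.lt_succ_of_lt him⟩, hxe.symm⟩
    · have hsub : (⋃ i : Fin m, I i) ⊆ Set.Ioo (-1:ℝ) 1 := by
        rintro x ⟨s, ⟨i, rfl⟩, hx⟩
        have h1 : a 0 ≤ a (i:ℕ) := ha_mono 0 _ (Nat.zero_le _)
        have h2 : a ((i:ℕ)+1) ≤ a m := ha_mono _ _ i.isLt
        have e0 : a 0 = -1 := by simp [ha_def]
        have em : a m = 1 := by
          simp only [ha_def]
          field_simp
          norm_num
        constructor
        · rw [← e0]; exact lt_of_le_of_lt h1 hx.1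
        · rw [← em]; exact lt_of_lt_of_le hx.2 h2
      rw [Set.diff_eq_empty.2 hsub]
      exact measure_empty
  -- decomposition of the restricted Lebesgue measure
  have hdec : volume.restrict (Set.Ioo (-1:ℝ) 1) = Measure.sum (fun i : Fin m => volume.restrict (I i)) :=
    (Measure.restrict_congr_set hcover).trans
      (Measure.restrict_iUnion hdisj (fun i => measurableSet_Ioo))
  -- pieces
  have hpiece : ∀ i : Fin m, Measure.map (φσ ∘ Real.arcsin) (volume.restrict (I i))
      = Measure.map Real.arcsin (volume.restrict (I (σ i))) := by
    intro i
    by_cases hci : σ i = i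
    · rw [hci]
      refine Measure.map_congr ?_
      filter_upwards [ae_restrict_mem measurableSet_Ioo] with s hs
      have hmem : Real.arcsin s ∈ Θ i := hΘI i s hs
      rw [hΘeq i] at hmem
      exact hid i hci (Real.arcsin s) hmem
    · have hcomp : (φσ ∘ Real.arcsin) =ᵐ[volume.restrict (I i)]
          (Real.arcsin ∘ fun t => (-2 + 2*(((i:ℕ):ℝ) + ((σ i : Fin m):ℕ) + 1)/m) - t) := by
        filter_upwards [ae_restrict_mem measurableSet_Ioo] with s hs
        have hmem : Real.arcsin s ∈ Θ i := hΘI i s hs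
        rw [hΘeq i] at hmem
        have h1 := hne i hci (Real.arcsin s) hmem
        have h2 : Real.sin (Real.arcsin s) = s :=
          Real.sin_arcsin (hIsub i hs).1 (hIsub i hs).2
        simp only [Function.comp_apply]
        rw [h1, h2]
      have hmeasref : Measurable (fun t : ℝ => (-2 + 2*(((i:ℕ):ℝ) + ((σ i : Fin m):ℕ) + 1)/m) - t) :=
        measurable_const.sub measurable_id
      rw [Measure.map_congr hcomp,
        ← Measure.map_map Real.measurable_arcsin hmeasref]
      congr 1
      have hres := Measure.restrict_map (μ := (volume : Measure ℝ))
        (f := fun t => (-2 + 2*(((i:ℕ):ℝ) + ((σ i : Fin m):ℕ) + 1)/m) - t)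
        hmeasref
        (measurableSet_Ioo : MeasurableSet (I (σ i)))
      rw [hpre i, Measure.map_sub_left_eq_self volume _] at hres
      exact hres.symm
  -- the pushforward of lam under φσ is lam
  have hmapφσ : Measure.map φσ lam = lam := by
    conv_lhs => rw [← lam_map_arcsin]
    rw [Measure.map_map hmeas Real.measurable_arcsin, hdec,
      Measure.map_sum (hmeas.comp Real.measurable_arcsin).aemeasurable]
    have h1 : (fun i : Fin m => Measure.map (φσ ∘ Real.arcsin) (volume.restrict (I i)))
        = fun i => Measure.map Real.arcsin (volume.restrict (I (σ i))) := funext hpiece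
    rw [h1]
    have h2 : Measure.sum (fun i : Fin m => Measure.map Real.arcsin (volume.restrict (I (σ i))))
        = Measure.sum (fun i : Fin m => Measure.map Real.arcsin (volume.restrict (I i))) := by
      rw [Measure.sum_fintype, Measure.sum_fintype]
      exact Equiv.sum_comp σ (fun i => Measure.map Real.arcsin (volume.restrict (I i)))
    rw [h2, ← Measure.map_sum Real.measurable_arcsin.aemeasurable, ← hdec, lam_map_arcsin]
  -- a.e. membership in the union of the open Θ-intervals
  have hΘae : ∀ᵐ φ ∂lam, φ ∈ ⋃ i : Fin m, Θ i := by
    rw [← lam_map_arcsin]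
    refine (ae_map_iff Real.measurable_arcsin.aemeasurable
      (MeasurableSet.iUnion (fun i : Fin m => (measurableSet_Ioo : MeasurableSet (Θ i))))).2 ?_
    rw [Measure.restrict_congr_set hcover]
    filter_upwards [ae_restrict_mem (MeasurableSet.iUnion (fun i : Fin m => measurableSet_Ioo))]
      with s hs
    obtain ⟨t, ⟨i, rfl⟩, hsi⟩ := hs
    exact Set.mem_iUnion.2 ⟨i, hΘI i s hsi⟩
  -- a.e. involution
  have hinv : ∀ᵐ φ ∂lam, φσ (φσ φ) = φ := by
    filter_upwards [hΘae] with φ hφ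
    obtain ⟨t, ⟨i, rfl⟩, hφi⟩ := hφ
    by_cases hci : σ i = i
    · have hmem : φ ∈ Set.Ioo (Real.arcsin (-1 + 2*((i:ℕ):ℝ)/m))
          (Real.arcsin (-1 + 2*(((i:ℕ):ℝ)+1)/m)) := by rw [← hΘeq i]; exact hφi
      have h1 := hid i hci φ hmem
      rw [h1, h1]
    · have hmem : φ ∈ Set.Ioo (Real.arcsin (-1 + 2*((i:ℕ):ℝ)/m))
          (Real.arcsin (-1 + 2*(((i:ℕ):ℝ)+1)/m)) := by rw [← hΘeq i]; exact hφi
      have h1 := hne i hci φ hmem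
      have hsin : Real.sin φ ∈ I i := hsinΘ i φ hφi
      have href : (-2 + 2*(((i:ℕ):ℝ) + ((σ i : Fin m):ℕ) + 1)/m - Real.sin φ) ∈ I (σ i) :=
        hrefl i _ hsin
      have hφσΘ : φσ φ ∈ Θ (σ i) := by
        rw [h1]
        exact hΘI (σ i) _ href
      have hciσ : σ (σ i) ≠ σ i := fun h => hci (h.symm.trans (hσ i))
      have hmem2 : φσ φ ∈ Set.Ioo (Real.arcsin (-1 + 2*(((σ i : Fin m):ℕ):ℝ)/m))
          (Real.arcsin (-1 + 2*((((σ i : Fin m):ℕ):ℝ)+1)/m)) := by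
        rw [← hΘeq (σ i)]; exact hφσΘ
      have h2 := hne (σ i) hciσ (φσ φ) hmem2
      have hsin2 : Real.sin (φσ φ) = -2 + 2*(((i:ℕ):ℝ) + ((σ i : Fin m):ℕ) + 1)/m - Real.sin φ := by
        rw [h1]
        exact Real.sin_arcsin (hIsub (σ i) href).1 (hIsub (σ i) href).2
      rw [h2, hsin2, hσ i]
      have e : -2 + 2*((((σ i : Fin m):ℕ):ℝ) + ((i:ℕ):ℝ) + 1)/m
          - (-2 + 2*(((i:ℕ):ℝ) + ((σ i : Fin m):ℕ) + 1)/m - Real.sin φ) = Real.sin φ := by ring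
      rw [e]
      exact Real.arcsin_sin (hΘsub i hφi).1 (hΘsub i hφi).2
  -- now the three claims
  have hF : Measurable (fun φ : ℝ => (φ, φσ φ)) := measurable_id.prodMk hmeas
  refine ⟨?_, ?_, ?_⟩
  · rw [Measure.map_map measurable_fst hF]
    have : (Prod.fst ∘ fun φ : ℝ => (φ, φσ φ)) = id := rfl
    rw [this, Measure.map_id]
  · rw [Measure.map_map measurable_snd hF]
    have : (Prod.snd ∘ fun φ : ℝ => (φ, φσ φ)) = φσ := rfl
    rw [this, hmapφσ]
  · rw [Measure.map_map measurable_swap hF]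
    have h1 : (Prod.swap ∘ fun φ : ℝ => (φ, φσ φ)) = fun φ => (φσ φ, φ) := rfl
    rw [h1]
    conv_rhs => rw [← hmapφσ, Measure.map_map hF hmeas]
    refine Measure.map_congr ?_
    filter_upwards [hinv] with φ hφ
    simp [Function.comp, hφ]
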